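/- arXiv:0802.0919 — 3 statements merged into one kernel-verified Lean document; each statement's English description precedes it below -/
import Mathlib

section
/- For any T > 0 and d ∈ ℕ, the set of d×d matrices A with nonnegative integer entries such that A is irreducible (some power of A has all entries strictly positive) and the Perron–Frobenius eigenvalue λ(A) is less than T, is finite. -/
lemma pow_nonneg_entries {d : ℕ} (A : Matrix (Fin d) (Fin d) ℤ)
    (hA : ∀ i j, 0 ≤ A i j) : ∀ n i j, 0 ≤ (A ^ n) i j := by
  intro n
  induction n with
  | zero => intro i j; simp [Matrix.one_apply]; split <;> simp
  | succ n ih =>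
      intro i j
      rw [pow_succ, Matrix.mul_apply]
      exact Finset.sum_nonneg fun l _ => mul_nonneg (ih i l) (hA l j)

lemma shorten {d : ℕ} (A : Matrix (Fin d) (Fin d) ℤ)
    (hA : ∀ i j, 0 ≤ A i j) (j i : Fin d) :
    ∀ k, 0 < (A ^ k) j i → ∃ m ≤ d, 0 < (A ^ m) j i := by
  intro k
  induction k using Nat.strong_induction_on with
  | _ k ih =>
    intro hk
    rcases le_or_gt k d with h | h
    · exact ⟨k, h, hk⟩
    · have hdpos : 0 < d := i.pos
      have key : ∀ t ≤ k, ∃ l, 0 < (A ^ t) j l ∧ 0 < (A ^ (k - t)) l i := by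
        intro t ht
        have hsum : (A ^ k) j i = ∑ l, (A ^ t) j l * (A ^ (k - t)) l i := by
          rw [← Matrix.mul_apply, ← pow_add, Nat.add_sub_cancel' ht]
        by_contra hcon
        push_neg at hcon
        have : (A ^ k) j i = 0 := by
          rw [hsum]
          apply Finset.sum_eq_zero
          intro l _
          rcases lt_or_ge 0 ((A ^ t) j l) with h1 | h1
          · have := hcon l h1
            have h2 := pow_nonneg_entries A hA (k - t) l i
            have : (A ^ (k - t)) l i = 0 := le_antisymm this h2
            simp [this]
          · have : (A ^ t) j l = 0 := le_antisymm h1 (pow_nonneg_entries A hA t j l)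
            simp [this]
        omega
      -- choose function on Fin (d+1)
      have hle : ∀ t : Fin (d + 1), (t : ℕ) ≤ k := fun t => le_trans (Nat.le_of_lt_succ t.2) h.le
      choose g hg1 hg2 using fun t : Fin (d + 1) => key t (hle t)
      obtain ⟨p, q, hpq, hgpq⟩ := Fintype.exists_ne_map_eq_of_card_lt g (by simp)
      wlog hlt : (p : ℕ) < (q : ℕ) generalizing p q
      · have hne : (p : ℕ) ≠ (q : ℕ) := fun hh => hpq (Fin.ext hh)
        exact this q p hpq.symm hgpq.symm (by omega)
      refine ih ((p : ℕ) + (k - (q : ℕ))) (by have := q.2; omega) ?_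
      rw [pow_add, Matrix.mul_apply]
      apply Finset.sum_pos'
      · intro l _
        exact mul_nonneg (pow_nonneg_entries A hA _ _ _) (pow_nonneg_entries A hA _ _ _)
      · refine ⟨g p, Finset.mem_univ _, mul_pos (hg1 p) ?_⟩
        rw [hgpq]
        exact hg2 q

/-- For any T > 0 and d, the set of d×d nonnegative integer matrices that
are irreducible (some power has all entries strictly positive) and whose
Perron–Frobenius eigenvalue (the eigenvalue admitting a strictly positive eigenvector)
is less than T, is finite. -/
theorem stmt2 (d : ℕ) (T : ℝ) (hT : 0 < T) :
    {A : Matrix (Fin d) (Fin d) ℤ |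
      (∀ i j, 0 ≤ A i j) ∧
      (∃ k : ℕ, 1 ≤ k ∧ ∀ i j, 0 < (A ^ k) i j) ∧
      (∃ (μ : ℝ) (v : Fin d → ℝ), μ < T ∧ (∀ i, 0 < v i) ∧
        (A.map (Int.cast : ℤ → ℝ)).mulVec v = μ • v)}.Finite := by
  set N : ℤ := ⌈(max 1 T) ^ (1 + d)⌉ with hN
  have hfin : {A : Matrix (Fin d) (Fin d) ℤ | ∀ i j, A i j ∈ Set.Icc (0 : ℤ) N}.Finite := by
    have : {A : Matrix (Fin d) (Fin d) ℤ | ∀ i j, A i j ∈ Set.Icc (0 : ℤ) N} ⊆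
        Set.pi Set.univ (fun _ : Fin d => Set.pi Set.univ (fun _ : Fin d => Set.Icc (0 : ℤ) N)) := by
      intro A hA i _ l _
      exact hA i l
    exact Set.Finite.subset (Set.Finite.pi fun _ => Set.Finite.pi fun _ => Set.finite_Icc _ _) this
  apply hfin.subset
  rintro A ⟨hA, ⟨k, hk1, hkpos⟩, μ, v, hμT, hv, heig⟩
  intro i j
  -- basic eigen facts
  have heign : ∀ n : ℕ, ∀ a : Fin d,
      ∑ l, ((A ^ n) a l : ℝ) * v l = μ ^ n * v a := by
    intro n
    induction n with
    | zero => intro a; simp [Matrix.one_apply, Finset.sum_ite_eq, Finset.mem_univ]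
    | succ n ihn =>
        intro a
        have expand : ∀ l, ((A ^ (n+1)) a l : ℝ) = ∑ b, ((A ^ n) a b : ℝ) * (A b l : ℝ) := by
          intro l
          rw [pow_succ, Matrix.mul_apply]
          push_cast
          ring
        calc ∑ l, ((A ^ (n+1)) a l : ℝ) * v l
            = ∑ l, ∑ b, ((A ^ n) a b : ℝ) * ((A b l : ℝ) * v l) := by
              refine Finset.sum_congr rfl fun l _ => ?_
              rw [expand l, Finset.sum_mul]
              exact Finset.sum_congr rfl fun b _ => by ring
          _ = ∑ b, ((A ^ n) a b : ℝ) * (∑ l, (A b l : ℝ) * v l) := by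
              rw [Finset.sum_comm]
              exact Finset.sum_congr rfl fun b _ => by rw [Finset.mul_sum]
          _ = ∑ b, ((A ^ n) a b : ℝ) * (μ * v b) := by
              refine Finset.sum_congr rfl fun b _ => ?_
              congr 1
              have := congrFun heig b
              simpa [Matrix.mulVec, dotProduct, Matrix.map_apply] using this
          _ = μ * ∑ b, ((A ^ n) a b : ℝ) * v b := by
              rw [Finset.mul_sum]; exact Finset.sum_congr rfl fun b _ => by ring
          _ = μ ^ (n+1) * v a := by rw [ihn a]; ring
  have hμ0 : 0 ≤ μ := by
    have h1 := heign 1 i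
    have hge : 0 ≤ μ ^ 1 * v i := by
      rw [← h1]
      exact Finset.sum_nonneg fun l _ => mul_nonneg (by exact_mod_cast pow_nonneg_entries A hA 1 i l) (hv l).le
    nlinarith [hv i]
  -- diagonal bound: (A^n) i i ≤ μ^n
  have hdiag : ∀ n : ℕ, ((A ^ n) i i : ℝ) ≤ μ ^ n := by
    intro n
    have h1 := heign n i
    have hge : ((A ^ n) i i : ℝ) * v i ≤ μ ^ n * v i := by
      rw [← h1]
      refine Finset.single_le_sum (f := fun l => ((A ^ n) i l : ℝ) * v l) ?_ (Finset.mem_univ i)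
      intro l _
      exact mul_nonneg (by exact_mod_cast pow_nonneg_entries A hA n i l) (hv l).le
    exact le_of_mul_le_mul_right hge (hv i)
  -- find short path j -> i
  obtain ⟨m, hm, hmpos⟩ := shorten A hA j i k (hkpos j i)
  -- A i j ≤ (A^(1+m)) i i
  have hentry : A i j ≤ (A ^ (1 + m)) i i := by
    calc A i j = A i j * 1 := by ring
      _ ≤ A i j * (A ^ m) j i := by
          exact mul_le_mul_of_nonneg_left hmpos (hA i j)
      _ ≤ ∑ l, A i l * (A ^ m) l i := by
          refine Finset.single_le_sum (f := fun l => A i l * (A ^ m) l i) ?_ (Finset.mem_univ j)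
          intro l _
          exact mul_nonneg (hA i l) (pow_nonneg_entries A hA m l i)
      _ = (A ^ (1 + m)) i i := by
          rw [pow_add, pow_one, Matrix.mul_apply]
  have hreal : (A i j : ℝ) ≤ (max 1 T) ^ (1 + d) := by
    calc (A i j : ℝ) ≤ ((A ^ (1 + m)) i i : ℝ) := by exact_mod_cast hentry
      _ ≤ μ ^ (1 + m) := hdiag (1 + m)
      _ ≤ (max 1 T) ^ (1 + m) := by
          exact pow_le_pow_left₀ hμ0 (le_trans hμT.le (le_max_right 1 T)) _
      _ ≤ (max 1 T) ^ (1 + d) := by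
          exact pow_le_pow_right₀ (le_max_left 1 T) (by omega)
  constructor
  · exact hA i j
  · have : (A i j : ℝ) ≤ (N : ℝ) := le_trans hreal (Int.le_ceil _)
    exact_mod_cast this
end

section
/- Let A be a d×d nonnegative integer matrix that is irreducible, and suppose its Perron–Frobenius eigenvalue satisfies λ(A) < T. Then every entry of A is strictly less than T^d. (Consequently the set of irreducible nonnegative integer d×d matrices with λ(A) < T is finite.) -/
private lemma powNN {d : ℕ} (A : Matrix (Fin d) (Fin d) ℤ)
    (hnn : ∀ i j, 0 ≤ A i j) : ∀ m a b, 0 ≤ (A ^ m) a b := by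
  intro m
  induction m with
  | zero => intro a b; by_cases h : a = b <;> simp [Matrix.one_apply, h]
  | succ n ih =>
    intro a b
    rw [pow_succ, Matrix.mul_apply]
    exact Finset.sum_nonneg fun l _ => mul_nonneg (ih a l) (hnn l b)

private lemma mulEntryGe {d : ℕ} (A B : Matrix (Fin d) (Fin d) ℤ)
    (hA : ∀ a b, 0 ≤ A a b) (hB : ∀ a b, 0 ≤ B a b) (a b c : Fin d) :
    A a b * B b c ≤ (A * B) a c := by
  rw [Matrix.mul_apply]
  exact Finset.single_le_sum (f := fun l => A a l * B l c)
    (fun l _ => mul_nonneg (hA a l) (hB l c)) (Finset.mem_univ b)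

private lemma reach {d : ℕ} (A : Matrix (Fin d) (Fin d) ℤ)
    (hnn : ∀ i j, 0 ≤ A i j) (j i : Fin d) (k : ℕ) (hk : 0 < (A ^ k) j i) :
    ∃ m ≤ d - 1, 0 < (A ^ m) j i := by
  classical
  set S : ℕ → Finset (Fin d) :=
    fun m => Finset.univ.filter (fun x => ∃ m' ≤ m, 0 < (A ^ m') j x) with hS
  have hmem : ∀ m x, x ∈ S m ↔ ∃ m' ≤ m, 0 < (A ^ m') j x := by
    intro m x; simp [hS]
  have hmono : ∀ {m n : ℕ}, m ≤ n → S m ⊆ S n := by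
    intro m n hmn x hx
    rcases (hmem m x).mp hx with ⟨m', hm', hpos⟩
    exact (hmem n x).mpr ⟨m', hm'.trans hmn, hpos⟩
  have hstep : ∀ m x, x ∈ S (m + 1) → x ∈ S m ∨ ∃ l ∈ S m, 0 < A l x := by
    intro m x hx
    rcases (hmem (m + 1) x).mp hx with ⟨m', hm', hpos⟩
    rcases Nat.lt_or_ge m' (m + 1) with h | h
    · exact Or.inl ((hmem m x).mpr ⟨m', Nat.lt_succ_iff.mp h, hpos⟩)
    · have hm'eq : m' = m + 1 := le_antisymm hm' h
      subst hm'eq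
      rw [pow_succ, Matrix.mul_apply] at hpos
      have : ∃ l ∈ (Finset.univ : Finset (Fin d)),
          (0 : ℤ) < (A ^ m) j l * A l x := by
        by_contra hcon
        push_neg at hcon
        have : (∑ l, (A ^ m) j l * A l x) ≤ 0 :=
          Finset.sum_nonpos fun l _ => hcon l (Finset.mem_univ l)
        omega
      rcases this with ⟨l, -, hl⟩
      rcases mul_pos_iff.mp hl with ⟨h1, h2⟩ | ⟨h1, -⟩
      · exact Or.inr ⟨l, (hmem m l).mpr ⟨m, le_refl m, h1⟩, h2⟩
      · exact absurd h1 (not_lt.mpr (powNN A hnn m j l))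
  have hstable : ∀ m, S m = S (m + 1) → ∀ n, S (m + n) = S m := by
    intro m heq n
    induction n with
    | zero => rfl
    | succ p ih =>
      apply Finset.Subset.antisymm
      · intro x hx
        have hx' : x ∈ S (m + p + 1) := by
          have : m + (p + 1) = m + p + 1 := by omega
          rwa [this] at hx
        rcases hstep (m + p) x hx' with h | ⟨l, hl, hpos⟩
        · rwa [ih] at h
        · rw [ih] at hl
          rcases (hmem m l).mp hl with ⟨m', hm', hpos'⟩
          have hxm : x ∈ S (m + 1) := by
            refine (hmem (m + 1) x).mpr ⟨m' + 1, by omega, ?_⟩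
            calc (0 : ℤ) < (A ^ m') j l * A l x := mul_pos hpos' hpos
              _ ≤ (A ^ m' * A) j x := mulEntryGe _ _ (powNN A hnn m') hnn j l x
              _ = (A ^ (m' + 1)) j x := by rw [pow_succ]
          rwa [← heq] at hxm
      · exact (hmono (by omega))
  have hkeyex : ∃ m ≤ d - 1, S m = S (m + 1) := by
    by_contra hcon
    push_neg at hcon
    have hgrow : ∀ m, m ≤ d → m + 1 ≤ (S m).card := by
      intro m
      induction m with
      | zero =>
        intro _
        have : j ∈ S 0 := (hmem 0 j).mpr ⟨0, le_refl 0, by simp [Matrix.one_apply]⟩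
        have := Finset.card_pos.mpr ⟨j, this⟩
        omega
      | succ p ih =>
        intro hpd
        have hp : p ≤ d := by omega
        have hne : S p ≠ S (p + 1) := hcon p (by omega)
        have hss : S p ⊂ S (p + 1) :=
          Finset.ssubset_iff_subset_ne.mpr ⟨hmono (by omega), hne⟩
        have := Finset.card_lt_card hss
        have := ih hp
        omega
    have h1 := hgrow d (le_refl d)
    have h2 : (S d).card ≤ d := by
      simpa using Finset.card_le_card (Finset.subset_univ (S d))
    omega
  rcases hkeyex with ⟨m, hmd, heq⟩
  have hik : i ∈ S k := (hmem k i).mpr ⟨k, le_refl k, hk⟩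
  have hid : i ∈ S (d - 1) := by
    rcases Nat.lt_or_ge (d - 1) k with h | h
    · have : k = m + (k - m) := by omega
      rw [this] at hik
      rw [hstable m heq (k - m)] at hik
      exact hmono hmd hik
    · exact hmono h hik
  exact (hmem (d - 1) i).mp hid

/-- An irreducible nonnegative integer d×d matrix whose Perron–Frobenius
eigenvalue is < T has every entry strictly less than T^d. -/
theorem stmt3 (d : ℕ) (T : ℝ) (A : Matrix (Fin d) (Fin d) ℤ)
    (hnn : ∀ i j, 0 ≤ A i j)
    (hirr : ∃ k : ℕ, 1 ≤ k ∧ ∀ i j, 0 < (A ^ k) i j)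
    (μ : ℝ) (v : Fin d → ℝ) (hv : ∀ i, 0 < v i)
    (heig : (A.map (Int.cast : ℤ → ℝ)).mulVec v = μ • v)
    (hμ : μ < T) :
    ∀ i j, (A i j : ℝ) < T ^ d := by
  obtain ⟨k, hk1, hkpos⟩ := hirr
  intro i j
  have hd : 0 < d := i.pos
  have hmp : ∀ m : ℕ, (A.map (Int.cast : ℤ → ℝ)) ^ m = (A ^ m).map Int.cast := by
    intro m
    have := map_pow ((Int.castRingHom ℝ).mapMatrix) A m
    simpa [RingHom.mapMatrix_apply] using this.symm
  have hvec : ∀ m : ℕ, ((A ^ m).map (Int.cast : ℤ → ℝ)).mulVec v = μ ^ m • v := by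
    intro m
    induction m with
    | zero => simp [Matrix.map_one]
    | succ n ih =>
      rw [← hmp (n + 1), pow_succ']
      rw [← Matrix.mulVec_mulVec, hmp n, ih, Matrix.mulVec_smul, heig,
        smul_smul, pow_succ]
  have hkey : ∀ (m : ℕ) (a b : Fin d), ((A ^ m) a b : ℝ) * v b ≤ μ ^ m * v a := by
    intro m a b
    have h1 : (((A ^ m).map (Int.cast : ℤ → ℝ)).mulVec v) a = μ ^ m * v a := by
      rw [hvec m]; rfl
    rw [Matrix.mulVec, dotProduct] at h1
    rw [← h1]
    exact Finset.single_le_sum (f := fun l => ((A ^ m).map (Int.cast : ℤ → ℝ)) a l * v l)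
      (fun l _ => mul_nonneg (by
        simp only [Matrix.map_apply]
        exact_mod_cast powNN A hnn m a l) (le_of_lt (hv l))) (Finset.mem_univ b)
  have hμ0 : 0 ≤ μ := by
    have h1 : ((A.map (Int.cast : ℤ → ℝ)).mulVec v) i = μ * v i := by
      rw [heig]; rfl
    have h2 : 0 ≤ μ * v i := by
      rw [← h1, Matrix.mulVec, dotProduct]
      exact Finset.sum_nonneg fun l _ => mul_nonneg (by
        simp only [Matrix.map_apply]
        exact_mod_cast hnn i l) (le_of_lt (hv l))
    by_contra h
    push_neg at h
    exact absurd h2 (not_le.mpr (mul_neg_of_neg_of_pos h (hv i)))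
  have hμ1 : 1 ≤ μ := by
    have h1 : (1 : ℝ) ≤ ((A ^ k) i i : ℝ) := by exact_mod_cast hkpos i i
    have h2 : (1 : ℝ) * v i ≤ μ ^ k * v i :=
      le_trans (by
        rw [one_mul]
        calc v i = 1 * v i := (one_mul _).symm
          _ ≤ ((A ^ k) i i : ℝ) * v i :=
            mul_le_mul_of_nonneg_right h1 (le_of_lt (hv i))) (hkey k i i)
    have h3 : (1 : ℝ) ≤ μ ^ k := le_of_mul_le_mul_right h2 (hv i)
    by_contra h
    push_neg at h
    have : μ ^ k < 1 := pow_lt_one₀ hμ0 h (by omega)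
    linarith
  have hT1 : 1 < T := lt_of_le_of_lt hμ1 hμ
  obtain ⟨m, hmle, hmpos⟩ := reach A hnn j i k (hkpos j i)
  have hv1 : v i ≤ μ ^ m * v j := by
    have h1 : (1 : ℝ) ≤ ((A ^ m) j i : ℝ) := by exact_mod_cast hmpos
    calc v i = 1 * v i := (one_mul _).symm
      _ ≤ ((A ^ m) j i : ℝ) * v i := mul_le_mul_of_nonneg_right h1 (le_of_lt (hv i))
      _ ≤ μ ^ m * v j := hkey m j i
  have hAij : (A i j : ℝ) * v j ≤ μ ^ (m + 1) * v j := by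
    have h1 : (A i j : ℝ) * v j ≤ μ * v i := by
      have := hkey 1 i j
      simpa [pow_one] using this
    calc (A i j : ℝ) * v j ≤ μ * v i := h1
      _ ≤ μ * (μ ^ m * v j) := mul_le_mul_of_nonneg_left hv1 hμ0
      _ = μ ^ (m + 1) * v j := by ring
  have hAij2 : (A i j : ℝ) ≤ μ ^ (m + 1) := le_of_mul_le_mul_right hAij (hv j)
  have hlt : μ ^ (m + 1) < T ^ (m + 1) :=
    pow_lt_pow_left₀ hμ hμ0 (Nat.succ_ne_zero m)
  have hle : T ^ (m + 1) ≤ T ^ d :=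
    pow_le_pow_right₀ (le_of_lt hT1) (by omega)
  linarith
end

section
/- For fixed m ∈ ℕ and T > 0, the set N(m,T) of pairs (A, D) where A ∈ Mat_m(ℤ≥0) is symmetric, D ∈ Mat_m(ℤ≥0) is diagonal, DA is irreducible nonnegative, and the Perron–Frobenius eigenvalue λ(DA) < T, is finite. -/
lemma stmt12_aux_finite (m : ℕ) (N : ℤ) :
    {M : Matrix (Fin m) (Fin m) ℤ | ∀ i j, M i j ∈ Set.Icc 0 N}.Finite := by
  have hsub : {M : Matrix (Fin m) (Fin m) ℤ | ∀ i j, M i j ∈ Set.Icc 0 N} ⊆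
      Set.pi Set.univ (fun _ : Fin m => Set.pi Set.univ fun _ : Fin m => Set.Icc (0:ℤ) N) := by
    intro M hM i _
    intro j _
    exact hM i j
  exact (Set.Finite.pi fun _ => Set.Finite.pi fun _ => Set.finite_Icc _ _).subset hsub

/-- for fixed m and T > 0, the set of pairs (A, D) with A symmetric
nonnegative integer, D diagonal nonnegative integer, DA irreducible nonnegative and
with Perron–Frobenius eigenvalue < T, is finite. -/
theorem stmt12 (m : ℕ) (T : ℝ) (hT : 0 < T) :
    {p : Matrix (Fin m) (Fin m) ℤ × Matrix (Fin m) (Fin m) ℤ |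
      p.1.IsSymm ∧ (∀ i j, 0 ≤ p.1 i j) ∧
      p.2.IsDiag ∧ (∀ i j, 0 ≤ p.2 i j) ∧
      (∃ k : ℕ, 1 ≤ k ∧ ∀ i j, 0 < ((p.2 * p.1) ^ k) i j) ∧
      (∃ (μ : ℝ) (v : Fin m → ℝ), μ < T ∧ (∀ i, 0 < v i) ∧
        ((p.2 * p.1).map (Int.cast : ℤ → ℝ)).mulVec v = μ • v)}.Finite := by
  set N : ℤ := ⌈(max T 1)^2⌉ with hNdef
  have hN0 : (0:ℤ) ≤ N := by
    have : (0:ℝ) ≤ (max T 1)^2 := by positivity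
    exact_mod_cast Int.ceil_nonneg this
  apply Set.Finite.subset
    ((stmt12_aux_finite m N).prod (stmt12_aux_finite m N))
  rintro ⟨A, D⟩ ⟨hAs, hApos, hDdiag, hDpos, ⟨k, hk1, hBk⟩, μ, v, hμT, hv, heig⟩
  set B : Matrix (Fin m) (Fin m) ℤ := D * A with hBdef
  -- basic facts
  have hBeq : ∀ i j, B i j = D i i * A i j := by
    intro i j
    have h1 : B i j = ∑ l, D i l * A l j := rfl
    rw [h1, Finset.sum_eq_single i]
    · intro l _ hl
      have h2 : D i l = 0 := hDdiag (Ne.symm hl)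
      rw [h2, zero_mul]
    · intro h; exact absurd (Finset.mem_univ i) h
  have hBpos : ∀ i j, 0 ≤ B i j := by
    intro i j; rw [hBeq]; exact mul_nonneg (hDpos i i) (hApos i j)
  -- eigen equation componentwise
  have heig' : ∀ i, ∑ j, (B i j : ℝ) * v j = μ * v i := by
    intro i
    have := congrFun heig i
    simpa [Matrix.mulVec, dotProduct, Matrix.map_apply] using this
  -- each row of B is nonzero
  have hrow : ∀ i, ∃ l, 1 ≤ B i l := by
    intro i
    by_contra h
    push_neg at h
    have hz : ∀ l, B i l = 0 := fun l => le_antisymm (by have := h l; omega) (hBpos i l)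
    have hBki : (B ^ k) i i = 0 := by
      obtain ⟨k', rfl⟩ : ∃ k', k = k' + 1 := ⟨k - 1, by omega⟩
      rw [pow_succ']
      have : (B * B ^ k') i i = ∑ l, B i l * (B ^ k') l i := rfl
      rw [this]
      apply Finset.sum_eq_zero
      intro l _
      rw [hz l, zero_mul]
    have := hBk i i
    omega
  -- the key single-term inequality
  have hterm : ∀ i j, (B i j : ℝ) * v j ≤ μ * v i := by
    intro i j
    rw [← heig' i]
    apply Finset.single_le_sum (f := fun l => (B i l : ℝ) * v l)
    · intro l _
      exact mul_nonneg (by exact_mod_cast hBpos i l) (hv l).le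
    · exact Finset.mem_univ j
  -- μ is positive
  have hμ0 : m ≠ 0 → 0 < μ := by
    intro hm
    have i : Fin m := ⟨0, Nat.pos_of_ne_zero hm⟩
    obtain ⟨l, hl⟩ := hrow i
    have h1 : (0:ℝ) < (B i l : ℝ) * v l := by
      apply mul_pos _ (hv l)
      exact_mod_cast hl
    have h2 : (B i l : ℝ) * v l ≤ μ * v i := hterm i l
    nlinarith [hv i]
  -- edge symmetry : B i j ≥ 1 → B j i ≥ 1
  have hsymm : ∀ i j, 1 ≤ B i j → 1 ≤ B j i := by
    intro i j hij
    rw [hBeq] at hij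
    have hA1 : 1 ≤ A i j := by nlinarith [hDpos i i, hApos i j]
    have hAji : 1 ≤ A j i := by
      have hap : A j i = A i j := hAs.apply i j
      rw [hap]; exact hA1
    obtain ⟨l, hl⟩ := hrow j
    have hD1 : 1 ≤ D j j := by
      rw [hBeq] at hl
      nlinarith [hDpos j j, hApos j l]
    rw [hBeq]
    nlinarith
  -- bound on B entries
  have hBbd : ∀ i j, B i j ≤ N := by
    intro i j
    rcases le_or_gt (B i j) 0 with h | h
    · omega
    have hij : 1 ≤ B i j := h
    have hji : 1 ≤ B j i := hsymm i j hij
    have hμ : 0 < μ := hμ0 (by rintro rfl; exact (Fin.elim0 i))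
    -- v i ≤ μ * v j
    have h1 : v i ≤ μ * v j := by
      have := hterm j i
      nlinarith [hv i, (show (1:ℝ) ≤ (B j i : ℝ) by exact_mod_cast hji)]
    have h2 : (B i j : ℝ) * v j ≤ μ * v i := hterm i j
    have h3 : (B i j : ℝ) ≤ μ ^ 2 := by nlinarith [hv j]
    have h4 : μ ^ 2 ≤ (max T 1) ^ 2 := by
      have : μ ≤ max T 1 := le_trans hμT.le (le_max_left _ _)
      nlinarith [hμ.le]
    have h5 : (B i j : ℝ) ≤ (N : ℝ) := le_trans (le_trans h3 h4) (Int.le_ceil _)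
    exact_mod_cast h5
  have hD1 : ∀ i, 1 ≤ D i i := by
    intro i
    obtain ⟨l, hl⟩ := hrow i
    rw [hBeq] at hl
    nlinarith [hDpos i i, hApos i l]
  constructor
  · -- A entries bounded
    intro i j
    refine ⟨hApos i j, ?_⟩
    have := hBbd i j
    rw [hBeq] at this
    nlinarith [hD1 i, hApos i j]
  · -- D entries bounded
    intro i j
    refine ⟨hDpos i j, ?_⟩
    rcases eq_or_ne i j with rfl | hij
    · obtain ⟨l, hl⟩ := hrow i
      have hAil : 1 ≤ A i l := by
        rw [hBeq] at hl
        nlinarith [hDpos i i, hApos i l]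
      have := hBbd i l
      rw [hBeq] at this
      nlinarith [hD1 i]
    · rw [hDdiag hij]; exact hN0
end
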